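/- Let V be a finite-dimensional complex vector space, let a, b, p be linear endomorphisms of V, let h be a real number, and assume tr(a∘p) = −4h, tr(b∘p) = 0, tr(a∘a) = −8, tr(b∘b) = −8, and tr(a∘b) = 0. Then for every real number ξ, the trace of the composition [ (1/(2(ξ−i)²))·(a + i·b) ] ∘ [ (2ih/(1+ξ²)⁴)·( (1−5ξ²)·b − 6ξ·a ) + (4iξ/(1+ξ²)³)·p ] equals h·(8i − 32ξ − 8iξ²)/((ξ−i)⁵(ξ+i)⁴). -/

import Mathlib

open Complex

theorem trace_case_a_III (V : Type*) [AddCommGroup V] [Module ℂ V] [FiniteDimensional ℂ V]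
    (a b p : V →ₗ[ℂ] V) (h : ℝ)
    (hap : LinearMap.trace ℂ V (a ∘ₗ p) = -4 * (h : ℂ))
    (hbp : LinearMap.trace ℂ V (b ∘ₗ p) = 0)
    (haa : LinearMap.trace ℂ V (a ∘ₗ a) = -8)
    (hbb : LinearMap.trace ℂ V (b ∘ₗ b) = -8)
    (hab : LinearMap.trace ℂ V (a ∘ₗ b) = 0) :
    ∀ ξ : ℝ, LinearMap.trace ℂ V
      (((1 / (2 * ((ξ : ℂ) - I) ^ 2)) • (a + I • b))
        ∘ₗ ((2 * I * (h : ℂ) / (1 + (ξ : ℂ) ^ 2) ^ 4) •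
              ((1 - 5 * (ξ : ℂ) ^ 2) • b - (6 * (ξ : ℂ)) • a)
            + (4 * I * (ξ : ℂ) / (1 + (ξ : ℂ) ^ 2) ^ 3) • p))
      = (h : ℂ) * (8 * I - 32 * (ξ : ℂ) - 8 * I * (ξ : ℂ) ^ 2) /
          (((ξ : ℂ) - I) ^ 5 * ((ξ : ℂ) + I) ^ 4) := by
  intro ξ
  have hba : LinearMap.trace ℂ V (b ∘ₗ a) = 0 := by
    rw [LinearMap.trace_comp_comm']; exact hab
  have hbp' : LinearMap.trace ℂ V (p ∘ₗ b) = 0 := by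
    rw [LinearMap.trace_comp_comm']; exact hbp
  have hap' : LinearMap.trace ℂ V (p ∘ₗ a) = -4 * (h : ℂ) := by
    rw [LinearMap.trace_comp_comm']; exact hap
  have h1 : (ξ : ℂ) - I ≠ 0 := by
    intro hc
    have := congrArg Complex.im hc
    simp at this
  have h2 : (ξ : ℂ) + I ≠ 0 := by
    intro hc
    have := congrArg Complex.im hc
    simp at this
  have h3 : (1 : ℂ) + (ξ : ℂ) ^ 2 = ((ξ : ℂ) - I) * ((ξ : ℂ) + I) := by
    ring_nf
    simp [Complex.I_sq]
    ring
  simp only [LinearMap.comp_add, LinearMap.add_comp, LinearMap.comp_smul,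
    LinearMap.smul_comp, LinearMap.comp_sub, LinearMap.sub_comp,
    map_add, map_smul, map_sub, smul_eq_mul, hap, hbp, haa, hbb, hab, hba]
  rw [h3]
  field_simp [h1, h2]
  linear_combination (64*(h:ℂ)*(ξ:ℂ)^2 + 16*(h:ℂ)*I*(ξ:ℂ)) * Complex.I_sq
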